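/- In the ring of formal power series in x over ℤ[y,z], the ordinary generating function of the homogeneous matching polynomials of cycles satisfies (1 − x·z − x²·y·z) · Σ_{n≥3} T_n(y,z) x^n = (3yz² + z³)·x³ + (2y²z² + yz³)·x⁴. -/

import Mathlib

open scoped Classical

noncomputable section

/-- The path graph `P_n` on `Fin n` (vertices `1,…,n` of the paper), edges `{i, i+1}`. -/
def pathG (n : ℕ) : SimpleGraph (Fin n) :=
  SimpleGraph.fromRel (fun i j => (i : ℕ) + 1 = (j : ℕ))

/-- The cycle graph `C_n` on `Fin n`, edges `{i, i+1 mod n}`. -/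
def cycG (n : ℕ) : SimpleGraph (Fin n) :=
  SimpleGraph.fromRel (fun i j => ((i : ℕ) + 1) % n = (j : ℕ))

/-- The matchings of a graph `G`: finsets of pairwise disjoint edges of `G`. -/
def matchings {V : Type*} [Fintype V] (G : SimpleGraph V) : Finset (Finset (Sym2 V)) :=
  Finset.univ.filter (fun μ =>
    (↑μ : Set (Sym2 V)) ⊆ G.edgeSet ∧
    ∀ e ∈ μ, ∀ f ∈ μ, e ≠ f → ∀ v : V, v ∈ e → v ∉ f)

/-- `U_m(Y,Z) = Σ_{μ matching of P_m} Y^{|μ|} Z^{(m-1)-|μ|}`,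
the homogeneous matching polynomial of the path `P_m`, evaluated at `Y`, `Z`. -/
def Upoly {S : Type*} [CommSemiring S] (m : ℕ) (Y Z : S) : S :=
  ∑ μ ∈ matchings (pathG m), Y ^ μ.card * Z ^ ((m - 1) - μ.card)

/-- `T_m(Y,Z) = Σ_{μ matching of C_m} Y^{|μ|} Z^{m-|μ|}`,
the homogeneous matching polynomial of the cycle `C_m` (`m ≥ 3`), evaluated at `Y`, `Z`. -/
def Tpoly {S : Type*} [CommSemiring S] (m : ℕ) (Y Z : S) : S :=
  ∑ μ ∈ matchings (cycG m), Y ^ μ.card * Z ^ (m - μ.card)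

/-- `(1 - x·z - x²·y·z) · Σ_{n≥3} T_n(y,z) xⁿ = (3yz²+z³)·x³ + (2y²z²+yz³)·x⁴`
in the ring of formal power series in `x` over `ℤ[y,z]`. -/
def pind (S : Finset ℕ) : Prop := ∀ i ∈ S, i + 1 ∉ S
def cind (n : ℕ) (S : Finset ℕ) : Prop := ∀ i ∈ S, (i + 1) % n ∉ S

def pSets (m : ℕ) : Finset (Finset ℕ) := (Finset.range m).powerset.filter pind
def cSets (n : ℕ) : Finset (Finset ℕ) := (Finset.range n).powerset.filter (cind n)

variable {R : Type*} [CommRing R]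

def Apoly (Y Z : R) (m : ℕ) : R := ∑ S ∈ pSets m, Y ^ S.card * Z ^ (m - S.card)
def Bpoly (Y Z : R) (n : ℕ) : R := ∑ S ∈ cSets n, Y ^ S.card * Z ^ (n - S.card)

lemma pind_mono {S T : Finset ℕ} (h : T ⊆ S) (hS : pind S) : pind T :=
  fun i hi hi1 => hS i (h hi) (h hi1)

lemma card_le_of_pSets {m : ℕ} {S : Finset ℕ} (h : S ∈ pSets m) : S.card ≤ m := by
  have := (Finset.mem_filter.mp h).1
  simpa using Finset.card_le_card (Finset.mem_powerset.mp this)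

lemma Apoly_zero (Y Z : R) : Apoly Y Z 0 = 1 := by
  have : pSets 0 = {∅} := by
    ext S
    simp [pSets, pind, Finset.subset_empty]
    intro h; subst h; simp
  simp [Apoly, this]

lemma Apoly_one (Y Z : R) : Apoly Y Z 1 = Z + Y := by
  have : pSets 1 = {∅, {0}} := by
    ext S
    constructor
    · intro h
      have h1 := Finset.mem_powerset.mp (Finset.mem_filter.mp h).1
      simp only [Finset.range_one] at h1
      rcases Finset.subset_singleton_iff.mp h1 with h | h <;> simp [h]
    · intro h
      rcases Finset.mem_insert.mp h with h | h <;>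
      · subst_eqs
        simp_all [pSets, pind]
  have hne : (∅ : Finset ℕ) ≠ {0} := by
    intro h; exact absurd (h ▸ Finset.mem_singleton_self 0) (Finset.notMem_empty 0)
  simp [Apoly, this, Finset.sum_pair hne]

lemma Apoly_rec (Y Z : R) (m : ℕ) :
    Apoly Y Z (m + 2) = Z * Apoly Y Z (m + 1) + Y * Z * Apoly Y Z m := by
  unfold Apoly
  rw [← Finset.sum_filter_add_sum_filter_not (pSets (m+2)) (fun S => m + 1 ∉ S)]
  congr 1
  · -- sets not containing m+1
    have hset : (pSets (m+2)).filter (fun S => m + 1 ∉ S) = pSets (m+1) := by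
      ext S
      simp only [pSets, Finset.mem_filter, Finset.mem_powerset]
      constructor
      · rintro ⟨⟨hsub, hp⟩, hnm⟩
        refine ⟨fun x hx => ?_, hp⟩
        have := hsub hx
        simp only [Finset.mem_range] at this ⊢
        rcases Nat.lt_succ_iff_lt_or_eq.mp this with h | h
        · exact h
        · exact absurd (h ▸ hx) hnm
      · rintro ⟨hsub, hp⟩
        refine ⟨⟨fun x hx => ?_, hp⟩, fun hm => ?_⟩
        · have := hsub hx; simp only [Finset.mem_range] at this ⊢; omega
        · have := hsub hm; simp at this
    rw [hset, Finset.mul_sum]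
    refine Finset.sum_congr rfl fun S hS => ?_
    have hc := card_le_of_pSets hS
    have : m + 2 - S.card = (m + 1 - S.card) + 1 := by omega
    rw [this]; ring
  · -- sets containing m+1
    rw [Finset.mul_sum]
    refine Finset.sum_nbij' (fun S => S.erase (m+1)) (fun T => insert (m+1) T)
      ?_ ?_ ?_ ?_ ?_
    · rintro S hS
      simp only [Finset.mem_filter, not_not] at hS
      obtain ⟨hS, hmem⟩ := hS
      rw [pSets, Finset.mem_filter, Finset.mem_powerset] at hS ⊢
      obtain ⟨hsub, hp⟩ := hS
      refine ⟨fun x hx => ?_, pind_mono (Finset.erase_subset _ _) hp⟩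
      obtain ⟨hx1, hx2⟩ := Finset.mem_erase.mp hx
      have := hsub hx2
      simp only [Finset.mem_range] at this ⊢
      rcases Nat.lt_or_ge x m with h | h
      · exact h
      · exact absurd ((show x = m by omega) ▸ hx2) (fun hc => hp m hc hmem)
    · rintro T hT
      rw [pSets, Finset.mem_filter, Finset.mem_powerset] at hT
      obtain ⟨hsub, hp⟩ := hT
      have hnm : m + 1 ∉ T := by
        intro h
        have := Finset.mem_range.mp (hsub h); omega
      simp only [Finset.mem_filter, not_not]
      constructor
      · rw [pSets, Finset.mem_filter, Finset.mem_powerset]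
        constructor
        · intro x hx
          rcases Finset.mem_insert.mp hx with h | h
          · simp [h]
          · have := hsub h; simp only [Finset.mem_range] at this ⊢; omega
        · intro i hi hi1
          rcases Finset.mem_insert.mp hi with h | h
          · subst h
            rcases Finset.mem_insert.mp hi1 with h' | h'
            · omega
            · have := hsub h'; simp at this; omega
          · rcases Finset.mem_insert.mp hi1 with h' | h'
            · have := hsub h; simp at this; omega
            · exact hp i h h'
      · exact Finset.mem_insert_self _ _
    · rintro S hS
      simp only [Finset.mem_filter, not_not] at hS
      exact Finset.insert_erase hS.2
    · rintro T hT
      rw [pSets, Finset.mem_filter, Finset.mem_powerset] at hT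
      have hnm : m + 1 ∉ T := by
        intro h
        have := Finset.mem_range.mp (hT.1 h); omega
      exact Finset.erase_insert hnm
    · rintro S hS
      simp only [Finset.mem_filter, not_not] at hS
      obtain ⟨hS, hmem⟩ := hS
      have hcard : (S.erase (m+1)).card = S.card - 1 := Finset.card_erase_of_mem hmem
      have hpos : 1 ≤ S.card := Finset.card_pos.mpr ⟨_, hmem⟩
      have hle : S.card ≤ m + 1 := by
        have herasemem : S.erase (m+1) ∈ pSets m := by
          rw [pSets, Finset.mem_filter, Finset.mem_powerset] at hS ⊢
          obtain ⟨hsub, hp⟩ := hS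
          refine ⟨fun x hx => ?_, pind_mono (Finset.erase_subset _ _) hp⟩
          obtain ⟨hx1, hx2⟩ := Finset.mem_erase.mp hx
          have := hsub hx2
          simp only [Finset.mem_range] at this ⊢
          rcases Nat.lt_or_ge x m with h | h
          · exact h
          · exact absurd ((show x = m by omega) ▸ hx2) (fun hc => hp m hc hmem)
        have := card_le_of_pSets herasemem
        omega
      rw [hcard]
      have h1 : S.card = (S.card - 1) + 1 := by omega
      have h2 : m + 2 - S.card = (m - (S.card - 1)) + 1 := by omega
      rw [h2]
      nth_rewrite 1 [h1]
      ring

-- new part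
lemma Bpoly_split (Y Z : R) (m : ℕ) :
    Bpoly Y Z (m + 3) = Z * Apoly Y Z (m + 2) + Y * Z ^ 2 * Apoly Y Z m := by
  unfold Bpoly Apoly
  rw [← Finset.sum_filter_add_sum_filter_not (cSets (m+3)) (fun S => m + 2 ∉ S)]
  congr 1
  · have hset : (cSets (m+3)).filter (fun S => m + 2 ∉ S) = pSets (m+2) := by
      ext S
      simp only [cSets, pSets, Finset.mem_filter, Finset.mem_powerset]
      constructor
      · rintro ⟨⟨hsub, hc⟩, hnm⟩
        have hsub' : S ⊆ Finset.range (m+2) := by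
          intro x hx
          have := Finset.mem_range.mp (hsub hx)
          have : x ≠ m + 2 := fun h => hnm (h ▸ hx)
          simp only [Finset.mem_range]; omega
        refine ⟨hsub', fun i hi hi1 => ?_⟩
        have hilt := Finset.mem_range.mp (hsub' hi)
        have heq : (i + 1) % (m + 3) = i + 1 := Nat.mod_eq_of_lt (by omega)
        exact hc i hi (by rw [heq]; exact hi1)
      · rintro ⟨hsub, hp⟩
        have hnm : m + 2 ∉ S := fun h => by
          have := Finset.mem_range.mp (hsub h); omega
        refine ⟨⟨fun x hx => by
          have := Finset.mem_range.mp (hsub hx)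
          simp only [Finset.mem_range]; omega, fun i hi hi1 => ?_⟩, hnm⟩
        have hilt := Finset.mem_range.mp (hsub hi)
        have heq : (i + 1) % (m + 3) = i + 1 := Nat.mod_eq_of_lt (by omega)
        rw [heq] at hi1
        exact hp i hi hi1
    rw [hset, Finset.mul_sum]
    refine Finset.sum_congr rfl fun S hS => ?_
    have hc := card_le_of_pSets hS
    have h2 : m + 3 - S.card = (m + 2 - S.card) + 1 := by omega
    rw [h2]; ring
  · rw [Finset.mul_sum]
    refine Finset.sum_nbij' (fun S => (S.erase (m+2)).image (· - 1))
      (fun T => insert (m+2) (T.image (· + 1))) ?_ ?_ ?_ ?_ ?_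
    · -- forward map lands in pSets m
      rintro S hS
      simp only [Finset.mem_filter, not_not] at hS
      obtain ⟨hS, hmem⟩ := hS
      rw [cSets, Finset.mem_filter, Finset.mem_powerset] at hS
      obtain ⟨hsub, hc⟩ := hS
      have h0 : 0 ∉ S := by
        have := hc (m+2) hmem
        simpa [Nat.mod_self] using this
      have hm1 : m + 1 ∉ S := fun h => hc (m+1) h (by
        rw [Nat.mod_eq_of_lt (by omega)]; exact hmem)
      have hrange : ∀ x ∈ S.erase (m+2), 1 ≤ x ∧ x ≤ m := by
        intro x hx
        obtain ⟨hx1, hx2⟩ := Finset.mem_erase.mp hx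
        have := Finset.mem_range.mp (hsub hx2)
        constructor
        · have : x ≠ 0 := fun h => h0 (h ▸ hx2)
          omega
        · rcases Nat.lt_or_ge x (m+1) with h | h
          · omega
          · exact absurd ((show x = m + 1 by omega) ▸ hx2) hm1
      rw [pSets, Finset.mem_filter, Finset.mem_powerset]
      constructor
      · intro y hy
        obtain ⟨x, hx, hxy⟩ := Finset.mem_image.mp hy
        have := hrange x hx
        simp only [Finset.mem_range]; omega
      · intro i hi hi1
        obtain ⟨x, hx, hxy⟩ := Finset.mem_image.mp hi
        obtain ⟨x', hx', hxy'⟩ := Finset.mem_image.mp hi1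
        have h1 := hrange x hx
        have h2 := hrange x' hx'
        have hxv : x = i + 1 := by omega
        have hxv' : x' = i + 2 := by omega
        have hxS := Finset.mem_of_mem_erase hx
        have hxS' := Finset.mem_of_mem_erase hx'
        refine hc x (hxS) ?_
        have : (x + 1) % (m + 3) = x + 1 := Nat.mod_eq_of_lt (by omega)
        rw [this, hxv]
        exact hxv' ▸ hxS'
    · -- backward map lands in the filter
      rintro T hT
      rw [pSets, Finset.mem_filter, Finset.mem_powerset] at hT
      obtain ⟨hsub, hp⟩ := hT
      have hbd : ∀ x ∈ T, x < m := fun x hx => Finset.mem_range.mp (hsub hx)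
      simp only [Finset.mem_filter, not_not]
      refine ⟨?_, Finset.mem_insert_self _ _⟩
      rw [cSets, Finset.mem_filter, Finset.mem_powerset]
      constructor
      · intro x hx
        rcases Finset.mem_insert.mp hx with h | h
        · simp only [Finset.mem_range]; omega
        · obtain ⟨y, hy, hyx⟩ := Finset.mem_image.mp h
          have := hbd y hy
          simp only [Finset.mem_range]; omega
      · intro i hi hi1
        rcases Finset.mem_insert.mp hi with h | h
        · subst h
          rw [Nat.mod_self] at hi1
          rcases Finset.mem_insert.mp hi1 with h' | h'
          · omega
          · obtain ⟨y, hy, hyx⟩ := Finset.mem_image.mp h'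
            omega
        · obtain ⟨y, hy, hyx⟩ := Finset.mem_image.mp h
          have hylt := hbd y hy
          have heq : (i + 1) % (m + 3) = i + 1 := Nat.mod_eq_of_lt (by omega)
          rw [heq] at hi1
          rcases Finset.mem_insert.mp hi1 with h' | h'
          · omega
          · obtain ⟨y', hy', hyx'⟩ := Finset.mem_image.mp h'
            have : y' = y + 1 := by omega
            exact hp y hy (this ▸ hy')
    · -- left inverse
      rintro S hS
      simp only [Finset.mem_filter, not_not] at hS
      obtain ⟨hS, hmem⟩ := hS
      rw [cSets, Finset.mem_filter, Finset.mem_powerset] at hS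
      obtain ⟨hsub, hc⟩ := hS
      have h0 : 0 ∉ S := by
        have := hc (m+2) hmem
        simpa [Nat.mod_self] using this
      have himg : ((S.erase (m+2)).image (· - 1)).image (· + 1) = S.erase (m+2) := by
        rw [Finset.image_image]
        ext x
        simp only [Finset.mem_image, Function.comp_apply]
        constructor
        · rintro ⟨y, hy, rfl⟩
          have hyne : y ≠ 0 := fun h => h0 (h ▸ Finset.mem_of_mem_erase hy)
          have heq : y - 1 + 1 = y := by omega
          rw [heq]; exact hy
        · intro hx
          have hxne : x ≠ 0 := fun h => h0 (h ▸ Finset.mem_of_mem_erase hx)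
          exact ⟨x, hx, by omega⟩
      show insert (m+2) (((S.erase (m+2)).image (· - 1)).image (· + 1)) = S
      rw [himg, Finset.insert_erase hmem]
    · -- right inverse
      rintro T hT
      rw [pSets, Finset.mem_filter, Finset.mem_powerset] at hT
      obtain ⟨hsub, hp⟩ := hT
      have hbd : ∀ x ∈ T, x < m := fun x hx => Finset.mem_range.mp (hsub hx)
      have hnm : m + 2 ∉ T.image (· + 1) := by
        intro h
        obtain ⟨y, hy, hyx⟩ := Finset.mem_image.mp h
        have := hbd y hy
        omega
      show ((insert (m+2) (T.image (· + 1))).erase (m+2)).image (· - 1) = T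
      rw [Finset.erase_insert hnm, Finset.image_image]
      ext x
      simp only [Finset.mem_image, Function.comp_apply]
      constructor
      · rintro ⟨y, hy, rfl⟩
        have heq : y + 1 - 1 = y := by omega
        rw [heq]; exact hy
      · intro hx
        exact ⟨x, hx, by omega⟩
    · -- weights
      rintro S hS
      simp only [Finset.mem_filter, not_not] at hS
      obtain ⟨hS, hmem⟩ := hS
      rw [cSets, Finset.mem_filter, Finset.mem_powerset] at hS
      obtain ⟨hsub, hc⟩ := hS
      have h0 : 0 ∉ S := by
        have := hc (m+2) hmem
        simpa [Nat.mod_self] using this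
      have hm1 : m + 1 ∉ S := fun h => hc (m+1) h (by
        rw [Nat.mod_eq_of_lt (by omega)]; exact hmem)
      have hinj : Set.InjOn (· - 1) ↑(S.erase (m+2)) := by
        intro a ha b hb hab
        have ha' : a ≠ 0 := fun h => h0 (h ▸ Finset.mem_of_mem_erase ha)
        have hb' : b ≠ 0 := fun h => h0 (h ▸ Finset.mem_of_mem_erase hb)
        simp only at hab
        omega
      have hcard : ((S.erase (m+2)).image (· - 1)).card = S.card - 1 := by
        rw [Finset.card_image_of_injOn hinj, Finset.card_erase_of_mem hmem]
      have hpos : 1 ≤ S.card := Finset.card_pos.mpr ⟨_, hmem⟩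
      have hle : S.card ≤ m + 1 := by
        have hsub2 : S ⊆ ((Finset.range (m+3)).erase 0).erase (m+1) := by
          intro x hx
          exact Finset.mem_erase.mpr ⟨fun h => hm1 (h ▸ hx), Finset.mem_erase.mpr
            ⟨fun h => h0 (h ▸ hx), hsub hx⟩⟩
        have h2 := Finset.card_le_card hsub2
        have h3 : (((Finset.range (m+3)).erase 0).erase (m+1)).card = m + 1 := by
          rw [Finset.card_erase_of_mem (by simp [Finset.mem_erase]),
            Finset.card_erase_of_mem (by simp), Finset.card_range]
          omega
        omega
      rw [hcard]
      have h1 : S.card = (S.card - 1) + 1 := by omega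
      have h2 : m + 3 - S.card = (m - (S.card - 1)) + 2 := by omega
      rw [h2]
      nth_rewrite 1 [h1]
      ring

-- edge map
def gmap (n : ℕ) [NeZero n] (i : Fin n) : Sym2 (Fin n) := s(i, i + 1)

lemma val_add_one (m : ℕ) (i : Fin (m + 3)) : ((i + 1 : Fin (m + 3)) : ℕ) = ((i : ℕ) + 1) % (m + 3) := by
  rw [Fin.add_def]
  simp [Fin.val_one]

lemma mod_key (m x : ℕ) (hx : x < m + 3) :
    (x + 1) % (m + 3) = x + 1 ∨ (x = m + 2 ∧ (x + 1) % (m + 3) = 0) := by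
  rcases Nat.lt_or_ge (x + 1) (m + 3) with h | h
  · exact Or.inl (Nat.mod_eq_of_lt h)
  · right
    have hx' : x = m + 2 := by omega
    subst hx'
    exact ⟨rfl, by rw [show m + 2 + 1 = m + 3 from rfl, Nat.mod_self]⟩

lemma gmap_inj (m : ℕ) : Function.Injective (gmap (m + 3)) := by
  intro i j h
  rw [gmap, gmap, Sym2.eq_iff] at h
  rcases h with ⟨h1, _⟩ | ⟨h1, h2⟩
  · exact h1
  · -- i = j + 1 and i + 1 = j : then j = j + 2
    exfalso
    have ha : (i : ℕ) = ((j : ℕ) + 1) % (m + 3) := by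
      rw [h1, val_add_one]
    have hb : ((i : ℕ) + 1) % (m + 3) = (j : ℕ) := by
      rw [← val_add_one m i, h2]
    have hi := i.isLt
    have hj := j.isLt
    rcases mod_key m (j : ℕ) hj with h | ⟨h, h'⟩ <;>
      rcases mod_key m (i : ℕ) hi with h'' | ⟨h'', h'''⟩ <;> omega

lemma gmap_mem_edgeSet (m : ℕ) (i : Fin (m + 3)) : gmap (m + 3) i ∈ (cycG (m + 3)).edgeSet := by
  rw [gmap, SimpleGraph.mem_edgeSet, cycG, SimpleGraph.fromRel_adj]
  constructor
  · intro h
    have h2 := congrArg Fin.val h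
    rw [val_add_one] at h2
    have hi := i.isLt
    rcases mod_key m (i : ℕ) hi with h3 | ⟨h3, h4⟩ <;> omega
  · left
    exact (val_add_one m i).symm

lemma edge_eq_gmap (m : ℕ) (e : Sym2 (Fin (m + 3))) (he : e ∈ (cycG (m + 3)).edgeSet) :
    ∃ i, e = gmap (m + 3) i := by
  induction e using Sym2.ind with
  | _ a b =>
    rw [SimpleGraph.mem_edgeSet, cycG, SimpleGraph.fromRel_adj] at he
    obtain ⟨hne, h | h⟩ := he
    · refine ⟨a, ?_⟩
      have hb : b = a + 1 := Fin.ext (by rw [val_add_one]; exact h.symm)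
      rw [gmap, hb]
    · refine ⟨b, ?_⟩
      have ha : a = b + 1 := Fin.ext (by rw [val_add_one]; exact h.symm)
      rw [gmap, ha]
      exact Sym2.eq_swap

lemma Tpoly_eq_Bpoly (Y Z : R) (m : ℕ) :
    Tpoly (m + 3) Y Z = Bpoly Y Z (m + 3) := by
  classical
  unfold Tpoly Bpoly
  set n := m + 3 with hn
  have hmem_matchings : ∀ μ, μ ∈ matchings (cycG n) ↔
      ((↑μ : Set (Sym2 (Fin n))) ⊆ (cycG n).edgeSet ∧
        ∀ e ∈ μ, ∀ f ∈ μ, e ≠ f → ∀ v, v ∈ e → v ∉ f) := by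
    intro μ; simp [matchings]
  refine Finset.sum_nbij'
    (fun μ => (Finset.univ.filter (fun i : Fin n => gmap n i ∈ μ)).image Fin.val)
    (fun S => (Finset.univ.filter (fun i : Fin n => (i : ℕ) ∈ S)).image (gmap n))
    ?_ ?_ ?_ ?_ ?_
  · -- forward lands in cSets n
    intro μ hμ
    rw [hmem_matchings] at hμ
    obtain ⟨hsub, hdisj⟩ := hμ
    rw [cSets, Finset.mem_filter, Finset.mem_powerset]
    constructor
    · intro x hx
      obtain ⟨i, _, rfl⟩ := Finset.mem_image.mp hx
      exact Finset.mem_range.mpr i.isLt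
    · intro k hk hk1
      obtain ⟨i, hi, hik⟩ := Finset.mem_image.mp hk
      obtain ⟨j, hj, hjk⟩ := Finset.mem_image.mp hk1
      rw [Finset.mem_filter] at hi hj
      have hij : j = i + 1 := by
        apply Fin.ext
        rw [val_add_one, hjk, hik]
      have hne : gmap n i ≠ gmap n (i + 1) := by
        intro h
        have h2 := congrArg Fin.val (gmap_inj m h)
        rw [val_add_one] at h2
        have hi' := i.isLt
        rcases mod_key m (i : ℕ) hi' with h3 | ⟨h3, h4⟩ <;> omega
      refine hdisj (gmap n i) hi.2 (gmap n (i+1)) (hij ▸ hj.2) hne (i + 1) ?_ ?_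
      · rw [gmap]; exact Sym2.mem_mk_right _ _
      · rw [gmap]; exact Sym2.mem_mk_left _ _
  · -- backward lands in matchings
    intro S hS
    rw [cSets, Finset.mem_filter, Finset.mem_powerset] at hS
    obtain ⟨hsub, hc⟩ := hS
    rw [hmem_matchings]
    constructor
    · intro e he
      obtain ⟨i, _, rfl⟩ := Finset.mem_image.mp he
      exact gmap_mem_edgeSet m i
    · intro e he f hf hef v hve hvf
      obtain ⟨i, hi, rfl⟩ := Finset.mem_image.mp he
      obtain ⟨j, hj, rfl⟩ := Finset.mem_image.mp hf
      rw [Finset.mem_filter] at hi hj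
      have hij : i ≠ j := fun h => hef (h ▸ rfl)
      rw [gmap, Sym2.mem_iff] at hve hvf
      have hi' := i.isLt
      have hj' := j.isLt
      rcases hve with rfl | rfl <;> rcases hvf with h | h
      · exact hij h
      · -- i = j + 1, so j ∈ S and (j+1)%n = i.val ∈ S
        apply hc (j : ℕ) hj.2
        rw [← val_add_one, ← h]
        exact hi.2
      · -- i + 1 = j
        apply hc (i : ℕ) hi.2
        rw [← val_add_one, h]
        exact hj.2
      · exact hij (by
          have := congrArg (· - (1 : Fin n)) h
          simpa using this)
  · -- left inverse
    intro μ hμ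
    rw [hmem_matchings] at hμ
    obtain ⟨hsub, hdisj⟩ := hμ
    ext e
    simp only [Finset.mem_image, Finset.mem_filter, Finset.mem_univ, true_and]
    constructor
    · rintro ⟨i, hi, rfl⟩
      obtain ⟨j, hj, hji⟩ := hi
      exact (Fin.ext hji : j = i) ▸ hj
    · intro he
      obtain ⟨i, rfl⟩ := edge_eq_gmap m e (hsub he)
      exact ⟨i, ⟨i, he, rfl⟩, rfl⟩
  · -- right inverse
    intro S hS
    rw [cSets, Finset.mem_filter, Finset.mem_powerset] at hS
    obtain ⟨hsub, hc⟩ := hS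
    ext k
    simp only [Finset.mem_image, Finset.mem_filter, Finset.mem_univ, true_and]
    constructor
    · rintro ⟨i, hi, rfl⟩
      obtain ⟨j, hj, hji⟩ := hi
      exact (gmap_inj m hji) ▸ hj
    · intro hk
      have hklt : k < n := Finset.mem_range.mp (hsub hk)
      exact ⟨⟨k, hklt⟩, ⟨⟨k, hklt⟩, hk, rfl⟩, rfl⟩
  · -- weights
    intro μ hμ
    rw [hmem_matchings] at hμ
    obtain ⟨hsub, hdisj⟩ := hμ
    have hcard : ((Finset.univ.filter (fun i : Fin n => gmap n i ∈ μ)).image Fin.val).card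
        = μ.card := by
      rw [Finset.card_image_of_injective _ Fin.val_injective]
      have : μ = (Finset.univ.filter (fun i : Fin n => gmap n i ∈ μ)).image (gmap n) := by
        ext e
        simp only [Finset.mem_image, Finset.mem_filter, Finset.mem_univ, true_and]
        constructor
        · intro he
          obtain ⟨i, rfl⟩ := edge_eq_gmap m e (hsub he)
          exact ⟨i, he, rfl⟩
        · rintro ⟨i, hi, rfl⟩
          exact hi
      conv_rhs => rw [this]
      rw [Finset.card_image_of_injective _ (gmap_inj m)]
    rw [hcard]

lemma Bpoly_three (Y Z : R) : Bpoly Y Z 3 = 3 * Y * Z ^ 2 + Z ^ 3 := by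
  have h := Bpoly_split Y Z 0
  have hA2 := Apoly_rec Y Z 0
  norm_num at h hA2
  rw [h, hA2, Apoly_zero, Apoly_one]; ring

lemma Bpoly_four (Y Z : R) : Bpoly Y Z 4 = 2 * Y ^ 2 * Z ^ 2 + Y * Z ^ 3 + Z * Bpoly Y Z 3 := by
  have h := Bpoly_split Y Z 1
  have hA3 := Apoly_rec Y Z 1
  have hA2 := Apoly_rec Y Z 0
  norm_num at h hA3 hA2
  rw [h, hA3, hA2, Apoly_zero, Apoly_one, Bpoly_three]; ring

lemma Bpoly_rec (Y Z : R) (m : ℕ) :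
    Bpoly Y Z (m + 5) = Z * Bpoly Y Z (m + 4) + Y * Z * Bpoly Y Z (m + 3) := by
  have hA4 : Apoly Y Z (m + 4) = Z * Apoly Y Z (m + 3) + Y * Z * Apoly Y Z (m + 2) := by
    have := Apoly_rec Y Z (m + 2)
    rw [show m + 2 + 2 = m + 4 by omega, show m + 2 + 1 = m + 3 by omega] at this
    exact this
  have hA2 : Apoly Y Z (m + 2) = Z * Apoly Y Z (m + 1) + Y * Z * Apoly Y Z m :=
    Apoly_rec Y Z m
  have hB5 : Bpoly Y Z (m + 5) = Z * Apoly Y Z (m + 4) + Y * Z ^ 2 * Apoly Y Z (m + 2) := by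
    have := Bpoly_split Y Z (m + 2)
    rw [show m + 2 + 3 = m + 5 by omega, show m + 2 + 2 = m + 4 by omega] at this
    exact this
  have hB4 : Bpoly Y Z (m + 4) = Z * Apoly Y Z (m + 3) + Y * Z ^ 2 * Apoly Y Z (m + 1) := by
    have := Bpoly_split Y Z (m + 1)
    rw [show m + 1 + 3 = m + 4 by omega, show m + 1 + 2 = m + 3 by omega] at this
    exact this
  have hB3 : Bpoly Y Z (m + 3) = Z * Apoly Y Z (m + 2) + Y * Z ^ 2 * Apoly Y Z m :=
    Bpoly_split Y Z m
  rw [hB5, hB4, hB3, hA4, hA2]; ring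


theorem cycle_matching_gf :
    (1 - PowerSeries.X * PowerSeries.C (R := MvPolynomial (Fin 2) ℤ) (MvPolynomial.X 1)
        - PowerSeries.X ^ 2 *
            PowerSeries.C (R := MvPolynomial (Fin 2) ℤ) (MvPolynomial.X 0 * MvPolynomial.X 1)) *
      PowerSeries.mk (fun n =>
        if n < 3 then 0
        else (Tpoly n (MvPolynomial.X 0) (MvPolynomial.X 1) : MvPolynomial (Fin 2) ℤ)) =
      PowerSeries.C (R := MvPolynomial (Fin 2) ℤ)
          (3 * MvPolynomial.X 0 * MvPolynomial.X 1 ^ 2 + MvPolynomial.X 1 ^ 3) *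
        PowerSeries.X ^ 3 +
      PowerSeries.C (R := MvPolynomial (Fin 2) ℤ)
          (2 * MvPolynomial.X 0 ^ 2 * MvPolynomial.X 1 ^ 2 +
            MvPolynomial.X 0 * MvPolynomial.X 1 ^ 3) *
        PowerSeries.X ^ 4 := by
  set Rp := MvPolynomial (Fin 2) ℤ
  set Y : Rp := MvPolynomial.X 0 with hY
  set Z : Rp := MvPolynomial.X 1 with hZ
  set f : ℕ → Rp := fun n => if n < 3 then 0 else Tpoly n Y Z with hf
  have hf3 : ∀ n, 3 ≤ n → f n = Bpoly Y Z n := by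
    intro n hn
    obtain ⟨m, rfl⟩ : ∃ m, n = m + 3 := ⟨n - 3, by omega⟩
    simp only [hf]
    rw [if_neg (by omega), Tpoly_eq_Bpoly]
  apply PowerSeries.ext
  intro n
  simp only [sub_mul, one_mul, map_sub, mul_assoc]
  rw [map_add, PowerSeries.coeff_C_mul, PowerSeries.coeff_C_mul, PowerSeries.coeff_X_pow,
    PowerSeries.coeff_X_pow]
  have hXmul : ∀ k (φ : PowerSeries Rp), (PowerSeries.coeff (R := Rp) k) (PowerSeries.X * φ)
      = if 1 ≤ k then (PowerSeries.coeff (R := Rp) (k - 1)) φ else 0 := by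
    intro k φ
    rw [← pow_one (PowerSeries.X : PowerSeries Rp), PowerSeries.coeff_X_pow_mul']
  have hX2mul : ∀ k (φ : PowerSeries Rp), (PowerSeries.coeff (R := Rp) k)
      ((PowerSeries.X : PowerSeries Rp) ^ 2 * φ)
      = if 2 ≤ k then (PowerSeries.coeff (R := Rp) (k - 2)) φ else 0 := by
    intro k φ
    rw [PowerSeries.coeff_X_pow_mul']
  rw [hXmul, hX2mul, PowerSeries.coeff_mk]
  by_cases h3 : n < 3
  · interval_cases n <;>
      simp [hf, PowerSeries.coeff_C_mul, PowerSeries.coeff_mk]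
  · push_neg at h3
    rw [if_pos (by omega), if_pos (by omega), PowerSeries.coeff_C_mul,
      PowerSeries.coeff_C_mul, PowerSeries.coeff_mk, PowerSeries.coeff_mk]
    rw [hf3 n h3]
    by_cases h4 : n = 3
    · subst h4
      norm_num
      rw [hf]
      norm_num [Bpoly_three]
      ring
    · by_cases h5 : n = 4
      · subst h5
        norm_num
        rw [hf3 3 (by norm_num)]
        rw [hf]
        norm_num [Bpoly_four]
        ring
      · obtain ⟨m, rfl⟩ : ∃ m, n = m + 5 := ⟨n - 5, by omega⟩
        rw [if_neg (by omega), if_neg (by omega)]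
        rw [show m + 5 - 1 = m + 4 by omega, show m + 5 - 2 = m + 3 by omega,
          hf3 (m + 4) (by omega), hf3 (m + 3) (by omega), Bpoly_rec]
        ring
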